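/- Let K be a field containing the group μ of roots of unity of ℓ-power order it possesses, with μ of finite order ℓ^m. In 𝔯_K = (ℚ_ℓ/ℤ_ℓ) ⊗_ℤ K^×, the element ℓ^(−k) ⊗ x is trivial if and only if x = ζ·y^(ℓ^k) for some root of unity ζ ∈ K of ℓ-power order and some y ∈ K^×. -/

import Mathlib

open scoped TensorProduct

/-- The additive subgroup ℤ_ℓ of ℚ_ℓ. -/
noncomputable def padicIntSubgroup (ℓ : ℕ) [Fact ℓ.Prime] : AddSubgroup ℚ_[ℓ] :=
  (PadicInt.Coe.ringHom (p := ℓ)).toAddMonoidHom.range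

/-- The ℓ-primary divisible group ℚ_ℓ/ℤ_ℓ. -/
def QmodZ (ℓ : ℕ) [Fact ℓ.Prime] : Type := ℚ_[ℓ] ⧸ padicIntSubgroup ℓ

noncomputable instance (ℓ : ℕ) [Fact ℓ.Prime] : AddCommGroup (QmodZ ℓ) :=
  inferInstanceAs (AddCommGroup (ℚ_[ℓ] ⧸ padicIntSubgroup ℓ))

/-- The class of `ℓ^{-k}` in ℚ_ℓ/ℤ_ℓ. -/
noncomputable def ellPowInv (ℓ : ℕ) [Fact ℓ.Prime] (k : ℕ) : QmodZ ℓ :=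
  QuotientAddGroup.mk (((ℓ : ℚ_[ℓ]) ^ k)⁻¹)

section basics
variable (ℓ : ℕ) [Fact ℓ.Prime]

lemma ell_ne_zero : ((ℓ : ℚ_[ℓ])) ≠ 0 := by
  exact_mod_cast (Fact.out : ℓ.Prime).ne_zero

lemma mem_padicIntSubgroup_iff (q : ℚ_[ℓ]) : q ∈ padicIntSubgroup ℓ ↔ ‖q‖ ≤ 1 := by
  constructor
  · rintro ⟨z, rfl⟩
    exact z.2
  · intro h
    exact ⟨⟨q, h⟩, rfl⟩

lemma zsmul_mk (c : ℤ) (q : ℚ_[ℓ]) :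
    c • (QuotientAddGroup.mk q : QmodZ ℓ) = QuotientAddGroup.mk ((c : ℚ_[ℓ]) * q) := by
  rw [← zsmul_eq_mul]
  rfl

lemma zsmul_ellPowInv (c : ℤ) (n : ℕ) :
    c • ellPowInv ℓ n = QuotientAddGroup.mk ((c : ℚ_[ℓ]) * ((ℓ : ℚ_[ℓ]) ^ n)⁻¹) :=
  zsmul_mk ℓ c _

lemma zsmul_ellPowInv_eq_zero_iff (c : ℤ) (n : ℕ) :
    c • ellPowInv ℓ n = 0 ↔ ((ℓ : ℤ) ^ n) ∣ c := by
  rw [zsmul_ellPowInv]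
  change (QuotientAddGroup.mk _ : ℚ_[ℓ] ⧸ padicIntSubgroup ℓ) = 0 ↔ _
  rw [QuotientAddGroup.eq_zero_iff, mem_padicIntSubgroup_iff]
  rw [norm_mul, norm_inv, norm_pow, Padic.norm_p]
  have hp1 : (1:ℝ) < (ℓ:ℝ) := by exact_mod_cast (Fact.out : ℓ.Prime).one_lt
  have h0 : (0:ℝ) < (ℓ:ℝ) := by positivity
  rw [← Padic.norm_int_le_pow_iff_dvd c n, zpow_neg, zpow_natCast]
  rw [inv_pow, inv_inv, ← le_div_iff₀ (by positivity), one_div]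

lemma pow_zsmul_ellPowInv (j k : ℕ) :
    ((ℓ : ℤ) ^ j) • ellPowInv ℓ (k + j) = ellPowInv ℓ k := by
  rw [zsmul_ellPowInv]
  congr 1
  push_cast
  rw [pow_add]
  have := ell_ne_zero ℓ
  field_simp

end basics

section DL
variable (ℓ : ℕ) [Fact ℓ.Prime]

/-- The ideal ℓ^n ℤ. -/
def ellIdeal (n : ℕ) : Ideal ℤ := Ideal.span {(ℓ : ℤ) ^ n}

/-- ℤ/ℓ^n. -/
abbrev ZModEll (n : ℕ) : Type := ℤ ⧸ ellIdeal ℓ n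

/-- Transition maps: multiplication by ℓ^(j-i). -/
noncomputable def ellF (i j : ℕ) (h : i ≤ j) : ZModEll ℓ i →ₗ[ℤ] ZModEll ℓ j :=
  Submodule.mapQ (ellIdeal ℓ i) (ellIdeal ℓ j) (((ℓ:ℤ) ^ (j - i)) • LinearMap.id)
    (by
      rintro x hx
      rw [ellIdeal, Ideal.mem_span_singleton] at hx
      simp only [Submodule.mem_comap, LinearMap.smul_apply, LinearMap.id_coe, id_eq,
        smul_eq_mul, ellIdeal, Ideal.mem_span_singleton]
      obtain ⟨d, rfl⟩ := hx
      exact ⟨d, by rw [← mul_assoc, ← pow_add, Nat.sub_add_cancel h]⟩)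

lemma ellF_mk (i j : ℕ) (h : i ≤ j) (c : ℤ) :
    ellF ℓ i j h (Submodule.Quotient.mk c) = Submodule.Quotient.mk ((ℓ:ℤ) ^ (j - i) * c) := by
  rw [ellF, Submodule.mapQ_apply]
  congr 1

instance : DirectedSystem (ZModEll ℓ) (fun i j h => ellF ℓ i j h) where
  map_self := by
    intro i x
    induction x using Submodule.Quotient.induction_on with
    | _ c =>
      rw [ellF_mk]
      congr 1
      simp
  map_map := by
    intro i j k hij hjk x
    induction x using Submodule.Quotient.induction_on with
    | _ c =>
      rw [ellF_mk, ellF_mk, ellF_mk]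
      congr 1
      rw [← mul_assoc, ← pow_add]
      congr 2
      omega

end DL

section Phi
variable (ℓ : ℕ) [Fact ℓ.Prime]

open Module

/-- Component maps ℤ/ℓ^n → ℚ_ℓ/ℤ_ℓ, c ↦ c·ℓ^{-n}. -/
noncomputable def phiComp (n : ℕ) : ZModEll ℓ n →ₗ[ℤ] QmodZ ℓ :=
  Submodule.liftQ (ellIdeal ℓ n) (LinearMap.toSpanSingleton ℤ _ (ellPowInv ℓ n))
    (by
      rw [ellIdeal, Ideal.span_singleton_le_iff_mem, LinearMap.mem_ker,
        LinearMap.toSpanSingleton_apply]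
      rw [zsmul_ellPowInv_eq_zero_iff])

lemma phiComp_mk (n : ℕ) (c : ℤ) :
    phiComp ℓ n (Submodule.Quotient.mk c) = c • ellPowInv ℓ n := by
  rw [phiComp, Submodule.liftQ_apply, LinearMap.toSpanSingleton_apply]

lemma phiComp_compat (i j : ℕ) (hij : i ≤ j) (x : ZModEll ℓ i) :
    phiComp ℓ j (ellF ℓ i j hij x) = phiComp ℓ i x := by
  induction x using Submodule.Quotient.induction_on with
  | _ c =>
    rw [ellF_mk, phiComp_mk, phiComp_mk, mul_comm, mul_smul]
    congr 1
    have : i + (j - i) = j := by omega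
    calc ((ℓ:ℤ) ^ (j-i)) • ellPowInv ℓ j = ((ℓ:ℤ) ^ (j-i)) • ellPowInv ℓ (i + (j - i)) := by
          rw [this]
      _ = ellPowInv ℓ i := pow_zsmul_ellPowInv ℓ (j - i) i

/-- The map from the direct limit of ℤ/ℓ^n to ℚ_ℓ/ℤ_ℓ. -/
noncomputable def phi : Module.DirectLimit (ZModEll ℓ) (ellF ℓ) →ₗ[ℤ] QmodZ ℓ :=
  Module.DirectLimit.lift ℤ ℕ (ZModEll ℓ) (ellF ℓ) (phiComp ℓ) (phiComp_compat ℓ)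

lemma phi_injective : Function.Injective (phi ℓ) := by
  rw [injective_iff_map_eq_zero]
  intro z hz
  induction z using Module.DirectLimit.induction_on with
  | ih n x =>
    induction x using Submodule.Quotient.induction_on with
    | _ c =>
      erw [phi, Module.DirectLimit.lift_of, phiComp_mk, zsmul_ellPowInv_eq_zero_iff] at hz
      have : (Submodule.Quotient.mk c : ZModEll ℓ n) = 0 := by
        rw [Submodule.Quotient.mk_eq_zero, ellIdeal, Ideal.mem_span_singleton]
        exact hz
      rw [this, map_zero]

lemma phi_surjective : Function.Surjective (phi ℓ) := by
  intro (q : ℚ_[ℓ] ⧸ padicIntSubgroup ℓ)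
  induction q using QuotientAddGroup.induction_on with
  | H q =>
    -- find n with ‖q‖ < ℓ^n
    have hp1 : (1:ℝ) < (ℓ:ℝ) := by exact_mod_cast (Fact.out : ℓ.Prime).one_lt
    obtain ⟨n, hn⟩ := pow_unbounded_of_one_lt ‖q‖ hp1
    have hz : ‖(ℓ:ℚ_[ℓ]) ^ n * q‖ ≤ 1 := by
      rw [norm_mul, norm_pow, Padic.norm_p]
      rw [inv_pow]
      rw [inv_mul_le_one₀ (by positivity)]
      exact le_of_lt hn
    set z : ℤ_[ℓ] := ⟨(ℓ:ℚ_[ℓ]) ^ n * q, hz⟩ with hzdef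
    set c : ℕ := z.appr n with hc
    have hspec := PadicInt.appr_spec n z
    rw [Ideal.mem_span_singleton] at hspec
    obtain ⟨w, hw⟩ := hspec
    refine ⟨Module.DirectLimit.of ℤ ℕ (ZModEll ℓ) (ellF ℓ) n (Submodule.Quotient.mk (c : ℤ)), ?_⟩
    erw [phi, Module.DirectLimit.lift_of, phiComp_mk, zsmul_ellPowInv]
    erw [QuotientAddGroup.eq]
    refine ⟨w, ?_⟩
    have h2 : (ℓ:ℚ_[ℓ]) ^ n * q - (c:ℚ_[ℓ]) = (ℓ:ℚ_[ℓ]) ^ n * (w : ℚ_[ℓ]) := by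
      have := congrArg (fun t : ℤ_[ℓ] => (t : ℚ_[ℓ])) hw
      push_cast at this
      rw [hzdef] at this
      simpa using this
    show (w : ℚ_[ℓ]) = -((c:ℚ_[ℓ]) * ((ℓ:ℚ_[ℓ]) ^ n)⁻¹) + q
    have hne : ((ℓ:ℚ_[ℓ]) ^ n) ≠ 0 := pow_ne_zero _ (ell_ne_zero ℓ)
    field_simp
    linear_combination -h2
end Phi

section Key
variable (ℓ : ℕ) [Fact ℓ.Prime]
open Module

lemma ellF_self (i : ℕ) : ellF ℓ i i le_rfl = LinearMap.id := by
  apply Submodule.linearMap_qext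
  ext
  show ellF ℓ i i le_rfl (Submodule.Quotient.mk 1) = Submodule.Quotient.mk 1
  rw [ellF_mk]
  simp

lemma ellF_comp (i j k : ℕ) (hij : i ≤ j) (hjk : j ≤ k) :
    (ellF ℓ j k hjk) ∘ₗ (ellF ℓ i j hij) = ellF ℓ i k (hij.trans hjk) := by
  apply Submodule.linearMap_qext
  ext
  show ellF ℓ j k hjk (ellF ℓ i j hij (Submodule.Quotient.mk 1))
      = ellF ℓ i k (hij.trans hjk) (Submodule.Quotient.mk 1)
  rw [ellF_mk, ellF_mk, ellF_mk]
  congr 1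
  rw [← mul_assoc, ← pow_add]
  congr 2
  omega

instance tensorDirected (N : Type) [AddCommGroup N] :
    DirectedSystem (fun n => ZModEll ℓ n ⊗[ℤ] N)
      (fun i j h => LinearMap.rTensor N (ellF ℓ i j h)) where
  map_self := by
    intro i x
    have h1 : ellF ℓ i i le_rfl = LinearMap.id := ellF_self ℓ i
    rw [h1, LinearMap.rTensor_id, LinearMap.id_apply]
  map_map := by
    intro i j k hij hjk x
    rw [← LinearMap.comp_apply, ← LinearMap.rTensor_comp, ellF_comp]

lemma mem_span_singleton_smul_top {a : ℤ} {N : Type} [AddCommGroup N] {z : N} :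
    z ∈ (Ideal.span {a} • (⊤ : Submodule ℤ N)) ↔ ∃ y, z = a • y := by
  constructor
  · intro h
    refine Submodule.smul_induction_on h ?_ ?_
    · rintro r hr m -
      rw [Ideal.mem_span_singleton] at hr
      obtain ⟨c, rfl⟩ := hr
      exact ⟨c • m, by rw [mul_comm, mul_smul, smul_comm]⟩
    · rintro y1 y2 ⟨c1, rfl⟩ ⟨c2, rfl⟩
      exact ⟨c1 + c2, (smul_add _ _ _).symm⟩
  · rintro ⟨y, rfl⟩
    exact Submodule.smul_mem_smul (Ideal.mem_span_singleton_self a) Submodule.mem_top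

/-- zero test at a finite stage -/
lemma mk_tmul_eq_zero_iff (n : ℕ) {N : Type} [AddCommGroup N] (c : ℤ) (x : N) :
    ((Submodule.Quotient.mk c : ZModEll ℓ n) ⊗ₜ[ℤ] x = (0 : ZModEll ℓ n ⊗[ℤ] N))
      ↔ ∃ y : N, c • x = ((ℓ:ℤ) ^ n) • y := by
  rw [show (0 : ZModEll ℓ n ⊗[ℤ] N) = (TensorProduct.quotTensorEquivQuotSMul N (ellIdeal ℓ n)).symm 0
    by simp, LinearEquiv.eq_symm_apply]
  rw [show (Submodule.Quotient.mk c : ZModEll ℓ n) = Ideal.Quotient.mk (ellIdeal ℓ n) c from rfl]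
  rw [TensorProduct.quotTensorEquivQuotSMul_mk_tmul]
  rw [Submodule.Quotient.mk_eq_zero]
  rw [ellIdeal, mem_span_singleton_smul_top]

noncomputable def phiEquiv : QmodZ ℓ ≃ₗ[ℤ] Module.DirectLimit (ZModEll ℓ) (ellF ℓ) :=
  (LinearEquiv.ofBijective (phi ℓ) ⟨phi_injective ℓ, phi_surjective ℓ⟩).symm

lemma phiEquiv_ellPowInv (k : ℕ) :
    phiEquiv ℓ (ellPowInv ℓ k)
      = Module.DirectLimit.of ℤ ℕ (ZModEll ℓ) (ellF ℓ) k (Submodule.Quotient.mk 1) := by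
  rw [phiEquiv, LinearEquiv.symm_apply_eq]; erw [LinearEquiv.ofBijective_apply]
  erw [phi, Module.DirectLimit.lift_of, phiComp_mk, one_smul]

noncomputable def bigE (N : Type) [AddCommGroup N] :
    QmodZ ℓ ⊗[ℤ] N ≃ₗ[ℤ] Module.DirectLimit (fun n => ZModEll ℓ n ⊗[ℤ] N)
      (fun i j h => LinearMap.rTensor N (ellF ℓ i j h)) :=
  (TensorProduct.congr (phiEquiv ℓ) (LinearEquiv.refl ℤ N)).trans
    (TensorProduct.directLimitLeft (ellF ℓ) N)

lemma bigE_tmul (N : Type) [AddCommGroup N] (k : ℕ) (x : N) :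
    bigE ℓ N ((ellPowInv ℓ k) ⊗ₜ[ℤ] x)
      = Module.DirectLimit.of ℤ ℕ (fun n => ZModEll ℓ n ⊗[ℤ] N)
          (fun i j h => LinearMap.rTensor N (ellF ℓ i j h)) k
          ((Submodule.Quotient.mk 1 : ZModEll ℓ k) ⊗ₜ[ℤ] x) := by
  have hsplit : bigE ℓ N ((ellPowInv ℓ k) ⊗ₜ[ℤ] x)
      = (TensorProduct.directLimitLeft (ellF ℓ) N)
          ((TensorProduct.congr (phiEquiv ℓ) (LinearEquiv.refl ℤ N))
            ((ellPowInv ℓ k) ⊗ₜ[ℤ] x)) := rfl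
  rw [hsplit, TensorProduct.congr_tmul, phiEquiv_ellPowInv]
  exact TensorProduct.directLimitLeft_tmul_of (ellF ℓ) N (Submodule.Quotient.mk 1) x

set_option maxHeartbeats 1000000 in
set_option synthInstance.maxHeartbeats 200000 in
/-- THE key lemma: ℓ^{-k} ⊗ x = 0 iff ∃ n y, ℓ^n • x = ℓ^{n+k} • y. -/
lemma ellPowInv_tmul_eq_zero_iff (k : ℕ) {N : Type} [AddCommGroup N] (x : N) :
    ((ellPowInv ℓ k) ⊗ₜ[ℤ] x = (0 : QmodZ ℓ ⊗[ℤ] N))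
      ↔ ∃ (n : ℕ) (y : N), ((ℓ:ℤ) ^ n) • x = ((ℓ:ℤ) ^ (n + k)) • y := by
  classical
  have hiff : ((ellPowInv ℓ k) ⊗ₜ[ℤ] x = (0 : QmodZ ℓ ⊗[ℤ] N))
      ↔ bigE ℓ N ((ellPowInv ℓ k) ⊗ₜ[ℤ] x) = 0 := by
    constructor
    · intro h
      rw [h]
      exact (bigE ℓ N).toLinearMap.map_zero
    · intro h
      apply (bigE ℓ N).injective
      rw [h]
      exact (bigE ℓ N).toLinearMap.map_zero.symm
  rw [hiff, bigE_tmul]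
  constructor
  · intro h
    obtain ⟨j, hij, hz⟩ := Module.DirectLimit.of.zero_exact h
    rw [LinearMap.rTensor_tmul, ellF_mk, mul_one] at hz
    rw [mk_tmul_eq_zero_iff] at hz
    obtain ⟨y, hy⟩ := hz
    exact ⟨j - k, y, by rw [show j - k + k = j from by omega]; exact hy⟩
  · rintro ⟨n, y, hy⟩
    have h1 : LinearMap.rTensor N (ellF ℓ k (n + k) (by omega))
        ((Submodule.Quotient.mk 1 : ZModEll ℓ k) ⊗ₜ[ℤ] x) = 0 := by
      rw [LinearMap.rTensor_tmul, ellF_mk, mul_one]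
      rw [mk_tmul_eq_zero_iff]
      exact ⟨y, by rw [show n + k - k = n by omega, hy]⟩
    have h2 := Module.DirectLimit.of_f (R := ℤ) (ι := ℕ)
      (G := fun n => ZModEll ℓ n ⊗[ℤ] N)
      (f := fun i j h => LinearMap.rTensor N (ellF ℓ i j h))
      (i := k) (j := n + k) (hij := by omega)
      (x := (Submodule.Quotient.mk 1 : ZModEll ℓ k) ⊗ₜ[ℤ] x)
    rw [← h2, h1]
    exact (Module.DirectLimit.of ℤ ℕ (fun n => ZModEll ℓ n ⊗[ℤ] N)
      (fun i j h => LinearMap.rTensor N (ellF ℓ i j h)) (n + k)).map_zero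

end Key


/-- Let K be a field whose ℓ-power roots of unity form a finite cyclic
group of order ℓ^m.  In 𝔯_K = (ℚ_ℓ/ℤ_ℓ) ⊗_ℤ K^×, the element ℓ^{-k} ⊗ x is trivial iff
x = ζ·y^{ℓ^k} for some ℓ-power root of unity ζ ∈ K and some y ∈ K^×. -/
theorem stmt_7 (ℓ : ℕ) [Fact ℓ.Prime] (K : Type) [Field K] (m : ℕ)
    (hμ : ∀ ζ : Kˣ, (∃ t : ℕ, ζ ^ (ℓ ^ t) = 1) → ζ ^ (ℓ ^ m) = 1)
    (hcyc : ∃ ζ : Kˣ, orderOf ζ = ℓ ^ m)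
    (k : ℕ) (x : Kˣ) :
    (ellPowInv ℓ k) ⊗ₜ[ℤ] (Additive.ofMul x) = (0 : (QmodZ ℓ) ⊗[ℤ] (Additive Kˣ))
      ↔ ∃ ζ y : Kˣ, (∃ t : ℕ, ζ ^ (ℓ ^ t) = 1) ∧ x = ζ * y ^ (ℓ ^ k) := by

  rw [ellPowInv_tmul_eq_zero_iff]
  constructor
  · rintro ⟨n, y', hy⟩
    set Y : Kˣ := Additive.toMul y' with hY
    have hy2 : ((ℓ ^ n : ℕ) : ℤ) • (Additive.ofMul x) = ((ℓ ^ (n + k) : ℕ) : ℤ) • y' := by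
      push_cast
      exact hy
    rw [natCast_zsmul, natCast_zsmul] at hy2
    have hrel : x ^ (ℓ ^ n) = Y ^ (ℓ ^ (n + k)) := by
      have := congrArg Additive.toMul hy2
      rwa [toMul_nsmul, toMul_nsmul, toMul_ofMul] at this
    refine ⟨x * (Y ^ (ℓ ^ k))⁻¹, Y, ⟨n, ?_⟩, ?_⟩
    · rw [mul_pow, inv_pow, ← pow_mul, show ℓ ^ k * ℓ ^ n = ℓ ^ (n + k) by
        rw [← pow_add, add_comm], ← hrel]
      group
    · group
  · rintro ⟨ζ, y, ⟨t, ht⟩, rfl⟩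
    have hζ : ζ ^ (ℓ ^ m) = 1 := hμ ζ ⟨t, ht⟩
    refine ⟨m, Additive.ofMul y, ?_⟩
    have hgrp : (ζ * y ^ (ℓ ^ k)) ^ (ℓ ^ m) = y ^ (ℓ ^ (m + k)) := by
      rw [mul_pow, hζ, one_mul, ← pow_mul, ← pow_add, add_comm]
    have := congrArg Additive.ofMul hgrp
    rw [ofMul_pow, ofMul_pow] at this
    rw [show ((ℓ:ℤ) ^ m) = ((ℓ ^ m : ℕ) : ℤ) by push_cast; ring,
        show ((ℓ:ℤ) ^ (m + k)) = ((ℓ ^ (m + k) : ℕ) : ℤ) by push_cast; ring,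
        natCast_zsmul, natCast_zsmul]
    exact this
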